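/- arXiv:cs/0607032 — 2 statements merged into one kernel-verified Lean document; each statement's English description precedes it below -/
import Mathlib

section
/- The sequence M2(n) converges as n → ∞, and its limit M2(∞) satisfies M2(∞) = (1/(1−e^{−1}))·(−1 + 2·M(∞) + Σ_{k≥2} (e^{−1}/k!)·M2(k)), where M(∞) = lim_{n→∞} M(n). (Numerically M2(∞) = 8.794530817….) -/
open Filter Topology Finset

noncomputable def bb (n k : ℕ) : ℝ := (n.choose k : ℝ) * (1/(n:ℝ))^k * (1 - 1/(n:ℝ))^(n-k)

lemma bb_nonneg {n : ℕ} (hn : 1 ≤ n) (k : ℕ) : 0 ≤ bb n k := by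
  have h : (1:ℝ) ≤ n := by exact_mod_cast hn
  have : (0:ℝ) ≤ 1 - 1/(n:ℝ) := by
    rw [sub_nonneg]
    rw [div_le_one (by linarith)]; linarith
  unfold bb; positivity

lemma bb_le {n : ℕ} (hn : 1 ≤ n) (k : ℕ) : bb n k ≤ 1 / (k.factorial : ℝ) := by
  have h : (1:ℝ) ≤ n := by exact_mod_cast hn
  have hx0 : (0:ℝ) ≤ 1 - 1/(n:ℝ) := by
    rw [sub_nonneg, div_le_one (by linarith)]; linarith
  have hx1 : (1 - 1/(n:ℝ)) ≤ 1 := by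
    have : (0:ℝ) ≤ 1/(n:ℝ) := by positivity
    linarith
  have hc : (n.choose k : ℝ) ≤ (n:ℝ)^k / (k.factorial : ℝ) := Nat.choose_le_pow_div k n
  have hxp : (1 - 1/(n:ℝ))^(n-k) ≤ 1 := pow_le_one₀ hx0 hx1
  have hp : (0:ℝ) ≤ (1/(n:ℝ))^k := by positivity
  calc bb n k ≤ ((n:ℝ)^k / (k.factorial : ℝ)) * (1/(n:ℝ))^k * 1 := by
        unfold bb
        apply mul_le_mul _ hxp (by positivity) (by positivity)
        exact mul_le_mul_of_nonneg_right hc hp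
    _ = 1 / (k.factorial : ℝ) := by
        rw [mul_one, div_mul_eq_mul_div, ← mul_pow, mul_one_div_cancel (by linarith : (0:ℝ) < n).ne', one_pow]


-- sum over the full range equals 1
lemma bb_sum_full {n : ℕ} (hn : 2 ≤ n) :
    ∑ k ∈ range (n+1), bb n k = 1 := by
  have hn0 : (n:ℝ) ≠ 0 := by positivity
  have := add_pow (1/(n:ℝ)) (1 - 1/(n:ℝ)) n
  simp only [add_sub_cancel, one_pow] at this
  rw [eq_comm] at this
  rw [← this]
  apply Finset.sum_congr rfl
  intro k _
  unfold bb; ring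

lemma bb_sum_Icc {n : ℕ} (hn : 2 ≤ n) :
    ∑ k ∈ Icc 2 n, bb n k = 1 - (1 - 1/(n:ℝ))^n - (1 - 1/(n:ℝ))^(n-1) := by
  have h1 : range (n+1) = Ico 0 (n+1) := by rw [Finset.range_eq_Ico]
  have h2 : (∑ k ∈ Ico 0 2, bb n k) + (∑ k ∈ Ico 2 (n+1), bb n k)
      = ∑ k ∈ Ico 0 (n+1), bb n k :=
    Finset.sum_Ico_consecutive _ (by omega) (by omega)
  have h3 : ∑ k ∈ Ico 0 2, bb n k = bb n 0 + bb n 1 := by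
    norm_num [Finset.sum_Ico_eq_sum_range, Finset.sum_range_succ]
  have h4 : Icc 2 n = Ico 2 (n+1) := by
    rw [Finset.Ico_add_one_right_eq_Icc]
  have hb0 : bb n 0 = (1 - 1/(n:ℝ))^n := by simp [bb]
  have hb1 : bb n 1 = (1 - 1/(n:ℝ))^(n-1) := by
    have hn0 : (n:ℝ) ≠ 0 := by positivity
    simp [bb]
    field_simp
  rw [h4]
  have h5 := bb_sum_full hn
  rw [h1, ← h2, h3, hb0, hb1] at h5
  linarith



-- exp(-1) ≤ (1-1/n)^(n-1) for n ≥ 2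
lemma exp_le_pow {n : ℕ} (hn : 2 ≤ n) :
    Real.exp (-1) ≤ (1 - 1/(n:ℝ))^(n-1) := by
  have ht : (2:ℝ) ≤ n := by exact_mod_cast hn
  set t : ℝ := (n:ℝ) with htdef
  have ht1 : (0:ℝ) < t - 1 := by linarith
  have h1 : Real.exp (-(1/(t-1))) ≤ 1 - 1/t := by
    have h2 : 1 + 1/(t-1) ≤ Real.exp (1/(t-1)) := by
      have := Real.add_one_le_exp (1/(t-1)); linarith
    have h3 : (0:ℝ) < 1 + 1/(t-1) := by positivity
    rw [Real.exp_neg]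
    have h4 : (0:ℝ) < 1 - 1/t := by
      have : 1/t < 1 := by rw [div_lt_one (by linarith)]; linarith
      linarith
    rw [inv_le_comm₀ (Real.exp_pos _) h4]
    calc (1 - 1/t)⁻¹ = 1 + 1/(t-1) := by
          field_simp
          ring
      _ ≤ Real.exp (1/(t-1)) := h2
  have key : Real.exp (-(1/(t-1))) ^ (n-1) = Real.exp (-1) := by
    rw [← Real.exp_nat_mul]
    congr 1
    have : ((n-1 : ℕ) : ℝ) = t - 1 := by
      rw [Nat.cast_sub (by omega)]; simp [htdef]
    rw [this]
    field_simp
  calc Real.exp (-1) = Real.exp (-(1/(t-1))) ^ (n-1) := key.symm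
    _ ≤ (1 - 1/t)^(n-1) := pow_le_pow_left₀ (Real.exp_pos _).le h1 _


lemma x_pow_tendsto : Tendsto (fun n : ℕ => (1 - 1/(n:ℝ))^n) atTop (𝓝 (Real.exp (-1))) := by
  have h := Real.tendsto_one_add_div_pow_exp (-1)
  convert h using 2 with n
  rw [sub_eq_add_neg, neg_div]

lemma x_tendsto : Tendsto (fun n : ℕ => (1 - 1/(n:ℝ))) atTop (𝓝 1) := by
  have h : Tendsto (fun n : ℕ => 1/(n:ℝ)) atTop (𝓝 0) := tendsto_one_div_atTop_nhds_zero_nat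
  have := (tendsto_const_nhds (x := (1:ℝ)) (f := atTop (α := ℕ))).sub h
  simpa using this

lemma choose_div_tendsto (k : ℕ) :
    Tendsto (fun n : ℕ => (n.choose k : ℝ) * (1/(n:ℝ))^k) atTop (𝓝 (1/(k.factorial:ℝ))) := by
  have hprod : Tendsto (fun n : ℕ => ∏ i ∈ range k, (1 - (i:ℝ)/(n:ℝ))) atTop (𝓝 1) := by
    have : Tendsto (fun n : ℕ => ∏ i ∈ range k, (1 - (i:ℝ)/(n:ℝ))) atTop
        (𝓝 (∏ i ∈ range k, (1:ℝ))) := by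
      apply tendsto_finset_prod
      intro i _
      have h : Tendsto (fun n : ℕ => (i:ℝ)/(n:ℝ)) atTop (𝓝 0) :=
        tendsto_const_div_atTop_nhds_zero_nat _
      have := (tendsto_const_nhds (x := (1:ℝ)) (f := atTop (α := ℕ))).sub h
      simpa using this
    simpa using this
  have hmain : Tendsto (fun n : ℕ => (1/(k.factorial:ℝ)) * ∏ i ∈ range k, (1 - (i:ℝ)/(n:ℝ)))
      atTop (𝓝 (1/(k.factorial:ℝ))) := by
    have := hprod.const_mul (1/(k.factorial:ℝ))
    simpa using this
  apply hmain.congr'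
  filter_upwards [eventually_ge_atTop (k+1)] with n hn
  have hk : k ≤ n := by omega
  have hn0 : (n:ℝ) ≠ 0 := by
    have : 1 ≤ n := by omega
    positivity
  have hdesc : (n.descFactorial k : ℝ) = ∏ i ∈ range k, ((n:ℝ) - i) := by
    rw [Nat.descFactorial_eq_prod_range]
    push_cast
    apply Finset.prod_congr rfl
    intro i hi
    rw [Nat.cast_sub (by simp at hi; omega)]
  have hchoose : (n.choose k : ℝ) * (k.factorial : ℝ) = ∏ i ∈ range k, ((n:ℝ) - i) := by
    rw [← hdesc, ← Nat.cast_mul]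
    congr 1
    rw [mul_comm, ← Nat.descFactorial_eq_factorial_mul_choose]
  have hkf : (k.factorial : ℝ) ≠ 0 := by positivity
  have hp : ∏ i ∈ range k, (1 - (i:ℝ)/(n:ℝ)) = (∏ i ∈ range k, ((n:ℝ) - i)) * (1/(n:ℝ))^k := by
    have : (1/(n:ℝ))^k = ∏ _i ∈ range k, (1/(n:ℝ)) := by
      rw [Finset.prod_const, Finset.card_range]
    rw [this, ← Finset.prod_mul_distrib]
    apply Finset.prod_congr rfl
    intro i _
    field_simp
  rw [hp, ← hchoose]
  field_simp

lemma bb_tendsto (k : ℕ) :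
    Tendsto (fun n : ℕ => bb n k) atTop (𝓝 (Real.exp (-1) / (k.factorial:ℝ))) := by
  have hq : Tendsto (fun n : ℕ => (1 - 1/(n:ℝ))^n / (1 - 1/(n:ℝ))^k) atTop
      (𝓝 (Real.exp (-1) / 1)) := by
    apply x_pow_tendsto.div _ one_ne_zero
    have := x_tendsto.pow k
    simpa using this
  have hmain := (choose_div_tendsto k).mul hq
  have hlim : 1/(k.factorial:ℝ) * (Real.exp (-1) / 1) = Real.exp (-1) / (k.factorial:ℝ) := by
    ring
  rw [hlim] at hmain
  apply hmain.congr'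
  filter_upwards [eventually_ge_atTop (k+2)] with n hn
  have h2 : (2:ℝ) ≤ n := by exact_mod_cast (by omega : 2 ≤ n)
  have hx0 : (1 - 1/(n:ℝ)) ≠ 0 := by
    have : 1/(n:ℝ) < 1 := by rw [div_lt_one (by linarith)]; linarith
    linarith
  rw [eq_comm]
  unfold bb
  rw [pow_sub₀ _ hx0 (by omega : k ≤ n)]
  ring


lemma tendsto_bounded (f : ℕ → ℝ) (a : ℝ) (h : Tendsto f atTop (𝓝 a)) :
    ∃ C : ℝ, ∀ n, |f n| ≤ C := by
  have h1 : Tendsto (fun n => |f n|) atTop (𝓝 |a|) := h.abs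
  obtain ⟨C, hC⟩ := h1.bddAbove_range
  exact ⟨C, fun n => hC (Set.mem_range_self n)⟩

lemma sum_tendsto (g : ℕ → ℝ) (C : ℝ) (hg : ∀ k, 2 ≤ k → |g k| ≤ C) :
    Summable (fun j : ℕ => Real.exp (-1) / (((j+2).factorial : ℕ) : ℝ) * g (j+2)) ∧
    Tendsto (fun n : ℕ => ∑ k ∈ Icc 2 n, bb n k * g k) atTop
      (𝓝 (∑' j : ℕ, Real.exp (-1) / (((j+2).factorial : ℕ) : ℝ) * g (j+2))) := by
  have hC : 0 ≤ C := le_trans (abs_nonneg _) (hg 2 le_rfl)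
  -- summable bound
  have hsb : Summable (fun j : ℕ => C / (((j+2).factorial : ℕ) : ℝ)) := by
    have h1 : Summable (fun j : ℕ => (1:ℝ) / (j.factorial : ℝ)) := by
      have := Real.summable_pow_div_factorial 1
      simpa using this
    have h2 : Summable (fun j : ℕ => (1:ℝ) / ((j+2).factorial : ℝ)) :=
      (summable_nat_add_iff 2).2 h1
    simpa [mul_one_div, div_eq_mul_inv] using h2.mul_left C
  -- bound on each term of the limit
  have hterm : ∀ j : ℕ, ‖Real.exp (-1) / (((j+2).factorial : ℕ) : ℝ) * g (j+2)‖
      ≤ C / (((j+2).factorial : ℕ) : ℝ) := by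
    intro j
    have hf : (0:ℝ) < ((j+2).factorial : ℝ) := by positivity
    rw [norm_mul, Real.norm_eq_abs, Real.norm_eq_abs,
      abs_of_pos (by positivity : (0:ℝ) < Real.exp (-1) / ((j+2).factorial : ℝ))]
    have h1 : Real.exp (-1) / ((j+2).factorial : ℝ) ≤ 1 / ((j+2).factorial : ℝ) := by
      gcongr
      exact Real.exp_le_one_iff.2 (by norm_num)
    calc Real.exp (-1) / ((j+2).factorial : ℝ) * |g (j+2)|
        ≤ 1 / ((j+2).factorial : ℝ) * C := by
          apply mul_le_mul h1 (hg (j+2) (by omega)) (abs_nonneg _) (by positivity)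
      _ = C / ((j+2).factorial : ℝ) := by ring
  have hsum : Summable (fun j : ℕ => Real.exp (-1) / (((j+2).factorial : ℕ) : ℝ) * g (j+2)) :=
    Summable.of_norm_bounded hsb hterm
  refine ⟨hsum, ?_⟩
  set f : ℕ → ℕ → ℝ := fun n j => if j + 2 ≤ n then bb n (j+2) * g (j+2) else 0 with hf
  have key : Tendsto (fun n => ∑' j, f n j) atTop
      (𝓝 (∑' j : ℕ, Real.exp (-1) / (((j+2).factorial : ℕ) : ℝ) * g (j+2))) := by
    apply tendsto_tsum_of_dominated_convergence hsb
    · intro j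
      apply ((bb_tendsto (j+2)).mul_const (g (j+2))).congr'
      filter_upwards [eventually_ge_atTop (j+2)] with n hn
      simp only [hf, if_pos hn]
    · filter_upwards [eventually_ge_atTop 1] with n hn j
      simp only [hf]
      split_ifs with h
      · rw [norm_mul, Real.norm_eq_abs, Real.norm_eq_abs,
          abs_of_nonneg (bb_nonneg hn _)]
        calc bb n (j+2) * |g (j+2)| ≤ (1 / ((j+2).factorial : ℝ)) * C := by
              apply mul_le_mul (bb_le hn _) (hg (j+2) (by omega)) (abs_nonneg _) (by positivity)
          _ = C / ((j+2).factorial : ℝ) := by ring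
      · simp
        positivity
  apply key.congr
  intro n
  have hz : ∀ j ∉ range (n-1), f n j = 0 := by
    intro j hj
    simp only [mem_range] at hj
    simp only [hf]
    rw [if_neg (by omega)]
  rw [tsum_eq_sum hz]
  rw [show Icc 2 n = Ico 2 (n+1) from (Finset.Ico_add_one_right_eq_Icc 2 n).symm,
    Finset.sum_Ico_eq_sum_range]
  simp only [hf]
  apply Finset.sum_congr (by congr 1)
  intro j hj
  simp only [mem_range] at hj
  rw [if_pos (by omega)]
  ring_nf


lemma M2_bounded (M M2 : ℕ → ℝ) (C : ℝ) (hC : 0 ≤ C) (hMb : ∀ n, |M n| ≤ C)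
    (hM2 : ∀ n : ℕ, 2 ≤ n →
      M2 n = 1 + 2 * (1 - 1/(n:ℝ))^n * M n + (1 - 1/(n:ℝ))^n * M2 n +
        2 * ∑ k ∈ Finset.Icc 2 n, bb n k * M k +
        ∑ k ∈ Finset.Icc 2 n, bb n k * M2 k) :
    ∀ n, 2 ≤ n → |M2 n| ≤ Real.exp 1 * (1 + 4*C) := by
  set B := Real.exp 1 * (1 + 4*C) with hB
  have hB0 : 0 ≤ B := by positivity
  intro n
  induction n using Nat.strong_induction_on with
  | _ n IH =>
  intro hn
  have hnR : (2:ℝ) ≤ n := by exact_mod_cast hn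
  set x : ℝ := 1 - 1/(n:ℝ) with hx
  have hx0 : 0 ≤ x := by
    rw [hx, sub_nonneg, div_le_one (by linarith)]; linarith
  have hx1 : x ≤ 1 := by
    have : (0:ℝ) < 1/(n:ℝ) := by positivity
    rw [hx]; linarith
  -- split off top term of the M2 sum
  have hsplit : ∑ k ∈ Icc 2 n, bb n k * M2 k
      = (∑ k ∈ Icc 2 (n-1), bb n k * M2 k) + (1/(n:ℝ))^n * M2 n := by
    have h1 : n = (n-1) + 1 := by omega
    rw [h1, Finset.sum_Icc_succ_top (by omega : 2 ≤ (n-1)+1), ← h1]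
    congr 1
    have : bb n n = (1/(n:ℝ))^n := by simp [bb]
    rw [this]
  set S1 := ∑ k ∈ Icc 2 n, bb n k * M k with hS1
  set S2 := ∑ k ∈ Icc 2 (n-1), bb n k * M2 k with hS2
  set s := ∑ k ∈ Icc 2 (n-1), bb n k with hs
  set p : ℝ := (1/(n:ℝ)) with hp
  -- key equation
  have heq : M2 n * (1 - x^n - p^n) = 1 + 2*x^n*(M n) + 2*S1 + S2 := by
    have h0 := hM2 n hn
    rw [hsplit] at h0
    linear_combination h0
  -- s value
  have hssum : s + p^n = 1 - x^n - x^(n-1) := by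
    rw [hs]
    have h1 : n = (n-1) + 1 := by omega
    have := bb_sum_Icc (n := n) hn
    rw [← hx] at this
    rw [h1, Finset.sum_Icc_succ_top (by omega : 2 ≤ (n-1)+1), ← h1] at this
    have hbnn : bb n n = p^n := by simp [bb, hp]
    rw [hbnn] at this
    linarith
  have hs0 : 0 ≤ s := Finset.sum_nonneg fun k _ => bb_nonneg (by omega) k
  have hc : 1 - x^n - p^n = s + x^(n-1) := by
    have hpn : (0:ℝ) ≤ p^n := by positivity
    linarith [hssum]
  have hxe : Real.exp (-1) ≤ x^(n-1) := by rw [hx]; exact exp_le_pow hn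
  have hcpos : 0 < 1 - x^n - p^n := by
    have := Real.exp_pos (-1)
    rw [hc]; linarith
  -- bounds
  have hsum_le : ∑ k ∈ Icc 2 n, bb n k ≤ 1 := by
    rw [bb_sum_Icc hn, ← hx]
    have h1 : (0:ℝ) ≤ x^n := by positivity
    have h2 : (0:ℝ) ≤ x^(n-1) := by positivity
    linarith
  have hS1b : |S1| ≤ C := by
    calc |S1| ≤ ∑ k ∈ Icc 2 n, |bb n k * M k| := Finset.abs_sum_le_sum_abs _ _
      _ ≤ ∑ k ∈ Icc 2 n, bb n k * C := by
          apply Finset.sum_le_sum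
          intro k _
          rw [abs_mul, abs_of_nonneg (bb_nonneg (by omega) k)]
          exact mul_le_mul_of_nonneg_left (hMb k) (bb_nonneg (by omega) k)
      _ = (∑ k ∈ Icc 2 n, bb n k) * C := by rw [← Finset.sum_mul]
      _ ≤ 1 * C := mul_le_mul_of_nonneg_right hsum_le hC
      _ = C := one_mul C
  have hS2b : |S2| ≤ s * B := by
    calc |S2| ≤ ∑ k ∈ Icc 2 (n-1), |bb n k * M2 k| := Finset.abs_sum_le_sum_abs _ _
      _ ≤ ∑ k ∈ Icc 2 (n-1), bb n k * B := by
          apply Finset.sum_le_sum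
          intro k hk
          simp only [Finset.mem_Icc] at hk
          rw [abs_mul, abs_of_nonneg (bb_nonneg (by omega) k)]
          exact mul_le_mul_of_nonneg_left (IH k (by omega) hk.1) (bb_nonneg (by omega) k)
      _ = s * B := by rw [hs, ← Finset.sum_mul]
  have hxnle : x^n ≤ 1 := pow_le_one₀ hx0 hx1
  have hMn : |M n| ≤ C := hMb n
  have hRHS : |1 + 2*x^n*(M n) + 2*S1 + S2| ≤ 1 + 4*C + s*B := by
    have h1 : |2*x^n*(M n)| ≤ 2*C := by
      rw [abs_mul, abs_mul, abs_two, abs_of_nonneg (by positivity : (0:ℝ) ≤ x^n)]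
      calc 2 * x^n * |M n| ≤ 2 * 1 * C := by
            apply mul_le_mul _ hMn (abs_nonneg _) (by norm_num)
            nlinarith
        _ = 2*C := by ring
    calc |1 + 2*x^n*(M n) + 2*S1 + S2|
        ≤ |1 + 2*x^n*(M n) + 2*S1| + |S2| := abs_add_le _ _
      _ ≤ (|1 + 2*x^n*(M n)| + |2*S1|) + |S2| := by
          have := abs_add_le (1 + 2*x^n*(M n)) (2*S1); linarith
      _ ≤ ((|(1:ℝ)| + |2*x^n*(M n)|) + |2*S1|) + |S2| := by
          have := abs_add_le (1:ℝ) (2*x^n*(M n)); linarith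
      _ ≤ ((1 + 2*C) + 2*C) + s*B := by
          have h2 : |2*S1| ≤ 2*C := by rw [abs_mul, abs_two]; linarith
          simp only [abs_one]
          linarith
      _ = 1 + 4*C + s*B := by ring
  -- conclude
  have habs : |M2 n| * (1 - x^n - p^n) = |M2 n * (1 - x^n - p^n)| := by
    rw [abs_mul, abs_of_pos hcpos]
  have hfin : |M2 n * (1 - x^n - p^n)| ≤ B * (1 - x^n - p^n) := by
    rw [heq]
    have hkey : 1 + 4*C ≤ x^(n-1) * B := by
      have : Real.exp (-1) * B = 1 + 4*C := by
        rw [hB, ← mul_assoc, ← Real.exp_add]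
        norm_num
      nlinarith [Real.exp_pos (-1)]
    calc |1 + 2*x^n*(M n) + 2*S1 + S2| ≤ 1 + 4*C + s*B := hRHS
      _ ≤ x^(n-1)*B + s*B := by linarith
      _ = B * (1 - x^n - p^n) := by rw [hc]; ring
  exact le_of_mul_le_mul_right (by linarith [hfin, habs]) hcpos


/-- the second moment M2(n) converges, and its limit M2(∞) equals
    (1/(1−e⁻¹))·(−1 + 2·M(∞) + Σ_{k≥2} (e⁻¹/k!)·M2(k)). -/
theorem M2_tendsto
    (M M2 : ℕ → ℝ) (Minf : ℝ)
    (hM1 : M 1 = 0)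
    (hM : ∀ n : ℕ, 2 ≤ n →
      M n = 1 + (1 - 1/(n:ℝ))^n * M n +
        ∑ k ∈ Finset.Icc 2 n,
          (n.choose k : ℝ) * (1/(n:ℝ))^k * (1 - 1/(n:ℝ))^(n-k) * M k)
    (hM21 : M2 1 = 0)
    (hM2 : ∀ n : ℕ, 2 ≤ n →
      M2 n = 1 + 2 * (1 - 1/(n:ℝ))^n * M n + (1 - 1/(n:ℝ))^n * M2 n +
        2 * ∑ k ∈ Finset.Icc 2 n,
          (n.choose k : ℝ) * (1/(n:ℝ))^k * (1 - 1/(n:ℝ))^(n-k) * M k +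
        ∑ k ∈ Finset.Icc 2 n,
          (n.choose k : ℝ) * (1/(n:ℝ))^k * (1 - 1/(n:ℝ))^(n-k) * M2 k)
    (hMinf : Tendsto M atTop (𝓝 Minf)) :
    ∃ L : ℝ, Tendsto M2 atTop (𝓝 L) ∧
      Summable (fun k : ℕ => Real.exp (-1) / (Nat.factorial (k+2)) * M2 (k+2)) ∧
      L = 1 / (1 - Real.exp (-1)) *
        (-1 + 2 * Minf + ∑' k : ℕ, Real.exp (-1) / (Nat.factorial (k+2)) * M2 (k+2)) := by
  -- recurrences in `bb` form
  have hM' : ∀ n : ℕ, 2 ≤ n →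
      M n = 1 + (1 - 1/(n:ℝ))^n * M n + ∑ k ∈ Icc 2 n, bb n k * M k := fun n hn => hM n hn
  have hM2' : ∀ n : ℕ, 2 ≤ n →
      M2 n = 1 + 2 * (1 - 1/(n:ℝ))^n * M n + (1 - 1/(n:ℝ))^n * M2 n +
        2 * ∑ k ∈ Icc 2 n, bb n k * M k +
        ∑ k ∈ Icc 2 n, bb n k * M2 k := fun n hn => hM2 n hn
  -- boundedness
  obtain ⟨C, hC⟩ := tendsto_bounded M Minf hMinf
  have hC0 : 0 ≤ C := le_trans (abs_nonneg _) (hC 0)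
  have hB := M2_bounded M M2 C hC0 hC hM2'
  set B := Real.exp 1 * (1 + 4*C) with hBdef
  -- sum limits
  obtain ⟨hsumM, htM⟩ := sum_tendsto M C (fun k _ => hC k)
  obtain ⟨hsumM2, htM2⟩ := sum_tendsto M2 B (fun k hk => hB k hk)
  set E := Real.exp (-1) with hE
  set SM := ∑' j : ℕ, E / (((j+2).factorial : ℕ) : ℝ) * M (j+2) with hSMdef
  set S2 := ∑' j : ℕ, E / (((j+2).factorial : ℕ) : ℝ) * M2 (j+2) with hS2def
  have hden : Tendsto (fun n : ℕ => 1 - (1 - 1/(n:ℝ))^n) atTop (𝓝 (1 - E)) :=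
    tendsto_const_nhds.sub x_pow_tendsto
  have hE1 : E < 1 := by
    rw [hE, show (1:ℝ) = Real.exp 0 from (Real.exp_zero).symm]
    exact Real.exp_lt_exp.2 (by norm_num)
  have hdenne : (1 - E) ≠ 0 := ne_of_gt (by linarith)
  -- identity for SM
  have hSM : Minf * (1 - E) = 1 + SM := by
    have t1 : Tendsto (fun n : ℕ => M n * (1 - (1 - 1/(n:ℝ))^n)) atTop
        (𝓝 (Minf * (1 - E))) := hMinf.mul hden
    have t2 : Tendsto (fun n : ℕ => M n * (1 - (1 - 1/(n:ℝ))^n)) atTop (𝓝 (1 + SM)) := by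
      apply (tendsto_const_nhds.add htM).congr'
      filter_upwards [eventually_ge_atTop 2] with n hn
      have := hM' n hn
      linear_combination -this
    exact tendsto_nhds_unique t1 t2
  -- limit of M2
  have tR : Tendsto (fun n : ℕ => 1 + 2 * (1 - 1/(n:ℝ))^n * M n +
      2 * (∑ k ∈ Icc 2 n, bb n k * M k) + ∑ k ∈ Icc 2 n, bb n k * M2 k) atTop
      (𝓝 (1 + 2 * E * Minf + 2 * SM + S2)) := by
    apply Tendsto.add _ htM2
    apply Tendsto.add _ (htM.const_mul 2)
    have h1 : Tendsto (fun n : ℕ => 2 * (1 - 1/(n:ℝ))^n * M n) atTop (𝓝 (2 * E * Minf)) := by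
      simpa [← mul_assoc] using (x_pow_tendsto.mul hMinf).const_mul 2
    exact tendsto_const_nhds.add h1
  have tM2 : Tendsto M2 atTop (𝓝 ((1 + 2 * E * Minf + 2 * SM + S2) / (1 - E))) := by
    apply (tR.div hden hdenne).congr'
    filter_upwards [eventually_ge_atTop 2] with n hn
    have hnR : (2:ℝ) ≤ n := by exact_mod_cast hn
    have hx0 : (0:ℝ) ≤ 1 - 1/(n:ℝ) := by
      rw [sub_nonneg, div_le_one (by linarith)]; linarith
    have hxlt : (1 - 1/(n:ℝ)) < 1 := by
      have : (0:ℝ) < 1/(n:ℝ) := by positivity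
      linarith
    have hne : 1 - (1 - 1/(n:ℝ))^n ≠ 0 := by
      have := pow_lt_one₀ hx0 hxlt (by omega : n ≠ 0)
      intro h; rw [sub_eq_zero] at h; linarith [h.symm]
    simp only [Pi.div_apply]
    rw [div_eq_iff hne]
    have := hM2' n hn
    linear_combination -this
  refine ⟨(1 + 2 * E * Minf + 2 * SM + S2) / (1 - E), tM2, hsumM2, ?_⟩
  have hR : 1 + 2 * E * Minf + 2 * SM + S2 = -1 + 2 * Minf + S2 := by
    linear_combination -2 * hSM
  rw [hR]
  field_simp
end

section
/- Fix a real α > 0 and let φ : ℕ → ℝ be the Laplace transform sequence φ(n) = E[e^{−α X(n)}], determined by φ(1) = 1 and, for n ≥ 2, φ(n) = e^{−α}·((1−1/n)^n·φ(n) + (1−1/n)^{n−1} + Σ_{k=2}^{n} b(n,k)·φ(k)). Then φ(n) converges as n → ∞ and lim_{n→∞} φ(n) = (e^{−α}/(1 − e^{−(α+1)}))·(e^{−1} + Σ_{k≥2} (e^{−1}/k!)·φ(k)). -/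
open Filter Topology Finset

noncomputable def bIR (n k : ℕ) : ℝ :=
  (n.choose k : ℝ) * (1/(n:ℝ))^k * (1 - 1/(n:ℝ))^(n-k)

lemma one_sub_inv_nonneg {n : ℕ} (hn : 1 ≤ n) : (0:ℝ) ≤ 1 - 1/(n:ℝ) := by
  have h1 : (1:ℝ) ≤ (n:ℝ) := by exact_mod_cast hn
  have : (1:ℝ)/(n:ℝ) ≤ 1 := by
    rw [div_le_one (by linarith)]; exact h1
  linarith

lemma bIR_nonneg {n : ℕ} (hn : 1 ≤ n) (k : ℕ) : 0 ≤ bIR n k := by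
  have := one_sub_inv_nonneg hn
  unfold bIR; positivity

lemma bIR_le {n : ℕ} (hn : 1 ≤ n) (k : ℕ) : bIR n k ≤ 1 / (k.factorial : ℝ) := by
  have hn0 : (0:ℝ) < (n:ℝ) := by exact_mod_cast hn
  have h1 : (1:ℝ) - 1/(n:ℝ) ≤ 1 := by
    have : (0:ℝ) ≤ 1/(n:ℝ) := by positivity
    linarith
  have h2 : (1 - 1/(n:ℝ))^(n-k) ≤ 1 := pow_le_one₀ (one_sub_inv_nonneg hn) h1
  have h3 : bIR n k ≤ (n.choose k : ℝ) * (1/(n:ℝ))^k := by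
    unfold bIR
    have : (0:ℝ) ≤ (n.choose k : ℝ) * (1/(n:ℝ))^k := by positivity
    nlinarith
  refine h3.trans ?_
  have hnat : (n.choose k) * k.factorial ≤ n ^ k := by
    rw [mul_comm, ← Nat.descFactorial_eq_factorial_mul_choose]
    exact Nat.descFactorial_le_pow n k
  have hnat' : (n.choose k : ℝ) * (k.factorial : ℝ) ≤ (n:ℝ) ^ k := by exact_mod_cast hnat
  have hfk : (0:ℝ) < (k.factorial : ℝ) := by exact_mod_cast k.factorial_pos
  rw [one_div_pow, ← div_eq_mul_one_div, div_le_div_iff₀ (by positivity) hfk]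
  linarith

lemma bIR_sum {n : ℕ} (hn : 1 ≤ n) : ∑ k ∈ range (n+1), bIR n k = 1 := by
  have h := add_pow (1/(n:ℝ)) (1 - 1/(n:ℝ)) n
  have h1 : (1/(n:ℝ) + (1 - 1/(n:ℝ)))^n = 1 := by ring_nf
  rw [h1] at h
  rw [h]
  refine Finset.sum_congr rfl fun k _ => ?_
  unfold bIR; ring

lemma bIR_zero (n : ℕ) : bIR n 0 = (1 - 1/(n:ℝ))^n := by simp [bIR]

lemma bIR_one {n : ℕ} (hn : 1 ≤ n) : bIR n 1 = (1 - 1/(n:ℝ))^(n-1) := by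
  have hn0 : (n:ℝ) ≠ 0 := by positivity
  simp [bIR, hn0]

lemma bIR_top {n : ℕ} : bIR n n = (1/(n:ℝ))^n := by simp [bIR]

lemma tendsto_bIR (k : ℕ) :
    Tendsto (fun n : ℕ => bIR n k) atTop (𝓝 (Real.exp (-1) / (k.factorial : ℝ))) := by
  have h1 : Tendsto (fun n : ℕ => (1 - 1/(n:ℝ))^n) atTop (𝓝 (Real.exp (-1))) := by
    refine (Real.tendsto_one_add_div_pow_exp (-1)).congr fun n => ?_
    rw [neg_div]; ring_nf
  have h2 : Tendsto (fun n : ℕ => (1 - 1/(n:ℝ))) atTop (𝓝 1) := by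
    have : Tendsto (fun n : ℕ => 1/(n:ℝ)) atTop (𝓝 0) := tendsto_one_div_atTop_nhds_zero_nat
    simpa using tendsto_const_nhds.sub this
  have h3 : Tendsto (fun n : ℕ => (1 - 1/(n:ℝ))^k) atTop (𝓝 1) := by
    simpa using h2.pow k
  have h4 : ∀ i : ℕ, Tendsto (fun n : ℕ => ((n:ℝ) - i)/n) atTop (𝓝 1) := by
    intro i
    have hi : Tendsto (fun n : ℕ => (i:ℝ)/n) atTop (𝓝 0) := by
      simpa [div_eq_mul_inv] using tendsto_one_div_atTop_nhds_zero_nat.const_mul (i:ℝ)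
    have hsub : Tendsto (fun n : ℕ => 1 - (i:ℝ)/n) atTop (𝓝 1) := by
      simpa using hi.const_sub 1
    refine hsub.congr' ?_
    filter_upwards [eventually_ge_atTop 1] with n hn
    have hn0 : (n:ℝ) ≠ 0 := by positivity
    field_simp
  have h5 : Tendsto (fun n : ℕ => ∏ i ∈ range k, ((n:ℝ) - i)/n) atTop (𝓝 1) := by
    have := tendsto_finset_prod (range k) (fun i (_ : i ∈ range k) => h4 i)
    simpa using this
  have hfk : (0:ℝ) < (k.factorial : ℝ) := by exact_mod_cast k.factorial_pos
  have key : Tendsto (fun n : ℕ =>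
      ((∏ i ∈ range k, ((n:ℝ) - i)/n) / (k.factorial : ℝ)) *
        ((1 - 1/(n:ℝ))^n / (1 - 1/(n:ℝ))^k)) atTop
      (𝓝 ((1 / (k.factorial : ℝ)) * (Real.exp (-1) / 1))) :=
    (h5.div_const _).mul (h1.div h3 one_ne_zero)
  have hval : (1 / (k.factorial : ℝ)) * (Real.exp (-1) / 1) = Real.exp (-1) / (k.factorial : ℝ) := by
    rw [div_one]; ring
  rw [hval] at key
  refine key.congr' ?_
  filter_upwards [eventually_ge_atTop (k+2)] with n hn
  have hn2 : 2 ≤ n := le_trans (by omega) hn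
  have hkn : k ≤ n := by omega
  have hn0 : (0:ℝ) < (n:ℝ) := by exact_mod_cast (by omega : 0 < n)
  have hx : (1:ℝ) - 1/(n:ℝ) ≠ 0 := by
    have h1n : (1:ℝ)/(n:ℝ) < 1 := by
      rw [div_lt_one hn0]; exact_mod_cast (by omega : 1 < n)
    linarith
  have hdesc : (n.descFactorial k : ℝ) = ∏ i ∈ range k, ((n:ℝ) - i) := by
    rw [Nat.descFactorial_eq_prod_range]
    push_cast [Nat.cast_prod]
    refine Finset.prod_congr rfl fun i hi => ?_
    rw [Nat.cast_sub (le_trans (le_of_lt (mem_range.mp hi)) hkn)]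
  have hchoose : (n.choose k : ℝ) * (k.factorial : ℝ) = ∏ i ∈ range k, ((n:ℝ) - i) := by
    rw [← hdesc]
    exact_mod_cast congrArg (Nat.cast (R := ℝ))
      (by rw [mul_comm]; exact (Nat.descFactorial_eq_factorial_mul_choose n k).symm)
  have hpow : (1 - 1/(n:ℝ))^(n-k) = (1 - 1/(n:ℝ))^n / (1 - 1/(n:ℝ))^k :=
    pow_sub₀ _ hx hkn
  have hA : (n.choose k : ℝ) * (1/(n:ℝ))^k
      = ((n.choose k:ℝ) * (k.factorial:ℝ) / (n:ℝ)^k) / (k.factorial:ℝ) := by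
    rw [one_div_pow]; field_simp
  unfold bIR
  rw [hpow, Finset.prod_div_distrib, Finset.prod_const, ← hchoose, hA]
  simp only [Finset.card_range]

/-- the Laplace transform sequence φ(n) = E[e^{−αX(n)}] converges and its
    limit equals (e^{−α}/(1−e^{−(α+1)}))·(e^{−1} + Σ_{k≥2} (e^{−1}/k!)·φ(k)). -/
theorem phi_tendsto
    (α : ℝ) (hα : 0 < α)
    (φ : ℕ → ℝ)
    (hφ1 : φ 1 = 1)
    (hφ : ∀ n : ℕ, 2 ≤ n →
      φ n = Real.exp (-α) * ((1 - 1/(n:ℝ))^n * φ n + (1 - 1/(n:ℝ))^(n-1) +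
        ∑ k ∈ Finset.Icc 2 n,
          (n.choose k : ℝ) * (1/(n:ℝ))^k * (1 - 1/(n:ℝ))^(n-k) * φ k)) :
    ∃ L : ℝ, Tendsto φ atTop (𝓝 L) ∧
      Summable (fun k : ℕ => Real.exp (-1) / (Nat.factorial (k+2)) * φ (k+2)) ∧
      L = Real.exp (-α) / (1 - Real.exp (-(α+1))) *
        (Real.exp (-1) + ∑' k : ℕ, Real.exp (-1) / (Nat.factorial (k+2)) * φ (k+2)) := by
  set E := Real.exp (-α) with hE
  have hE0 : 0 < E := Real.exp_pos _
  have hE1 : E < 1 := Real.exp_lt_one_iff.mpr (by linarith)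
  -- rewrite the recursion in terms of bIR
  have hrec : ∀ n : ℕ, 2 ≤ n →
      φ n = E * (bIR n 0 * φ n + bIR n 1 + ∑ k ∈ Icc 2 n, bIR n k * φ k) := by
    intro n hn
    have h := hφ n hn
    have h2 : ∑ k ∈ Icc 2 n, (n.choose k : ℝ) * (1/(n:ℝ))^k * (1 - 1/(n:ℝ))^(n-k) * φ k
        = ∑ k ∈ Icc 2 n, bIR n k * φ k :=
      Finset.sum_congr rfl fun k _ => by unfold bIR; ring
    rw [h2, ← bIR_zero n, ← bIR_one (show 1 ≤ n by omega)] at h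
    exact h
  -- rearranged key equation
  have hkey : ∀ n : ℕ, 2 ≤ n →
      φ n * (1 - E * (bIR n 0 + bIR n n)) =
        E * (bIR n 1 + ∑ k ∈ Icc 2 (n-1), bIR n k * φ k) := by
    intro n hn
    obtain ⟨m, rfl⟩ : ∃ m, n = m + 1 := ⟨n-1, by omega⟩
    have hsplit : ∑ k ∈ Icc 2 (m+1), bIR (m+1) k * φ k
        = ∑ k ∈ Icc 2 m, bIR (m+1) k * φ k + bIR (m+1) (m+1) * φ (m+1) :=
      Finset.sum_Icc_succ_top (by omega) _
    have h := hrec (m+1) hn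
    rw [hsplit] at h
    simp only [Nat.add_sub_cancel]
    linear_combination h
  -- decomposition of the total mass
  have hdecomp : ∀ n : ℕ, 2 ≤ n →
      bIR n 0 + bIR n 1 + ∑ k ∈ Icc 2 (n-1), bIR n k + bIR n n = 1 := by
    intro n hn
    obtain ⟨m, rfl⟩ : ∃ m, n = m + 2 := ⟨n-2, by omega⟩
    have h := bIR_sum (show 1 ≤ m+2 by omega)
    rw [Finset.sum_range_succ, Finset.sum_range_succ', Finset.sum_range_succ'] at h
    have hIcc : ∑ k ∈ Icc 2 (m+2-1), bIR (m+2) k = ∑ i ∈ range m, bIR (m+2) (i+1+1) := by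
      have e1 : Icc 2 (m+2-1) = Ico 2 (m+2) := by
        rw [show m+2-1 = m+1 from rfl]; exact (Finset.Ico_add_one_right_eq_Icc 2 (m+1)).symm
      rw [e1, Finset.sum_Ico_eq_sum_range, show m+2-2 = m by omega]
      exact Finset.sum_congr rfl fun i _ => by rw [show 2+i = i+1+1 by omega]
    rw [hIcc]
    linarith [h]
  -- bounds 0 ≤ φ n ≤ 1
  have hbnd : ∀ n : ℕ, 1 ≤ n → 0 ≤ φ n ∧ φ n ≤ 1 := by
    intro n
    induction n using Nat.strong_induction_on with
    | _ n ih =>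
      intro hn
      rcases eq_or_lt_of_le hn with h1 | h2
      · rw [← h1, hφ1]; exact ⟨zero_le_one, le_rfl⟩
      · have hn2 : 2 ≤ n := h2
        have key := hkey n hn2
        have hdec := hdecomp n hn2
        have hb0 := bIR_nonneg (show 1 ≤ n by omega) 0
        have hb1 := bIR_nonneg (show 1 ≤ n by omega) 1
        have hbn := bIR_nonneg (show 1 ≤ n by omega) n
        set T := ∑ k ∈ Icc 2 (n-1), bIR n k * φ k with hT
        set U := ∑ k ∈ Icc 2 (n-1), bIR n k with hU
        have hU0 : 0 ≤ U := Finset.sum_nonneg fun k _ => bIR_nonneg (by omega) k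
        have hT0 : 0 ≤ T := Finset.sum_nonneg fun k hk => by
          have hk' := Finset.mem_Icc.mp hk
          exact mul_nonneg (bIR_nonneg (by omega) k)
            ((ih k (by omega) (by omega)).1)
        have hTU : T ≤ U := Finset.sum_le_sum fun k hk => by
          have hk' := Finset.mem_Icc.mp hk
          exact mul_le_of_le_one_right (bIR_nonneg (by omega) k)
            ((ih k (by omega) (by omega)).2)
        have hD0 : 0 < 1 - E * (bIR n 0 + bIR n n) := by nlinarith
        have hphi : φ n = E * (bIR n 1 + T) / (1 - E * (bIR n 0 + bIR n n)) :=
          (eq_div_iff hD0.ne').mpr key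
        constructor
        · rw [hphi]
          exact div_nonneg (mul_nonneg hE0.le (by linarith)) hD0.le
        · rw [hphi, div_le_one hD0]
          have hETU : E * T ≤ E * U := mul_le_mul_of_nonneg_left hTU hE0.le
          nlinarith
  -- summability of the limit series
  have hbsum : Summable (fun k : ℕ => 1 / ((Nat.factorial (k+2) : ℕ) : ℝ)) := by
    have h := Real.summable_pow_div_factorial 1
    simp only [one_pow] at h
    exact (summable_nat_add_iff 2).mpr h
  have hgnonneg : ∀ k : ℕ, 0 ≤ Real.exp (-1) / (Nat.factorial (k+2) : ℝ) * φ (k+2) := fun k =>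
    mul_nonneg (by positivity) (hbnd (k+2) (by omega)).1
  have hgle : ∀ k : ℕ, Real.exp (-1) / (Nat.factorial (k+2) : ℝ) * φ (k+2)
      ≤ 1 / ((Nat.factorial (k+2) : ℕ) : ℝ) := by
    intro k
    have he1 : Real.exp (-1) ≤ 1 := (Real.exp_lt_one_iff.mpr (by norm_num)).le
    have hf := (hbnd (k+2) (by omega)).2
    have hf0 := (hbnd (k+2) (by omega)).1
    have hfk : (0:ℝ) < (Nat.factorial (k+2) : ℝ) := by exact_mod_cast (k+2).factorial_pos
    calc Real.exp (-1) / (Nat.factorial (k+2) : ℝ) * φ (k+2)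
        ≤ Real.exp (-1) / (Nat.factorial (k+2) : ℝ) * 1 := by
          exact mul_le_mul_of_nonneg_left hf (by positivity)
      _ ≤ 1 / ((Nat.factorial (k+2) : ℕ) : ℝ) := by
          rw [mul_one]; gcongr
  have hSummable : Summable (fun k : ℕ => Real.exp (-1) / (Nat.factorial (k+2)) * φ (k+2)) :=
    Summable.of_nonneg_of_le hgnonneg hgle hbsum
  -- dominated convergence
  set f : ℕ → ℕ → ℝ := fun n k => if k + 2 ≤ n then bIR n (k+2) * φ (k+2) else 0 with hfdef
  have hab : ∀ k : ℕ, Tendsto (fun n => f n k) atTop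
      (𝓝 (Real.exp (-1) / (Nat.factorial (k+2)) * φ (k+2))) := by
    intro k
    have h := (tendsto_bIR (k+2)).mul_const (φ (k+2))
    rw [show Real.exp (-1) / (Nat.factorial (k+2) : ℝ) * φ (k+2)
      = Real.exp (-1) / ((k+2).factorial : ℝ) * φ (k+2) from rfl]
    refine Tendsto.congr' ?_ h
    filter_upwards [eventually_ge_atTop (k+2)] with n hn
    simp only [hfdef, if_pos hn]
  have h_bound : ∀ n k, ‖f n k‖ ≤ 1 / ((Nat.factorial (k+2) : ℕ) : ℝ) := by
    intro n k
    by_cases h : k + 2 ≤ n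
    · simp only [hfdef, if_pos h]
      rw [Real.norm_eq_abs, abs_of_nonneg (mul_nonneg (bIR_nonneg (by omega) _)
        (hbnd (k+2) (by omega)).1)]
      exact (mul_le_of_le_one_right (bIR_nonneg (by omega) _)
        (hbnd (k+2) (by omega)).2).trans (bIR_le (by omega) (k+2))
    · simp only [hfdef, if_neg h, norm_zero]
      positivity
  have hTsum : Tendsto (fun n => ∑' k, f n k) atTop
      (𝓝 (∑' k, Real.exp (-1) / (Nat.factorial (k+2)) * φ (k+2))) :=
    tendsto_tsum_of_dominated_convergence hbsum hab (Eventually.of_forall h_bound)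
  have htsum_eq : ∀ n : ℕ, 2 ≤ n → ∑' k, f n k = ∑ k ∈ Icc 2 n, bIR n k * φ k := by
    intro n hn
    have h1 : ∑' k, f n k = ∑ k ∈ range (n-1), f n k := by
      refine tsum_eq_sum ?_
      intro k hk
      have hk' : ¬ (k + 2 ≤ n) := by
        simp only [mem_range, not_lt] at hk; omega
      simp only [hfdef, if_neg hk']
    rw [h1, show Icc 2 n = Ico 2 (n+1) from (Finset.Ico_add_one_right_eq_Icc 2 n).symm,
      Finset.sum_Ico_eq_sum_range, show n + 1 - 2 = n - 1 by omega]
    refine Finset.sum_congr rfl fun i hi => ?_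
    have hi' : i + 2 ≤ n := by
      simp only [mem_range] at hi; omega
    simp only [hfdef, if_pos hi', show 2 + i = i + 2 by omega]
  -- limits of the pieces
  have hden_pos : 0 < 1 - Real.exp (-(α+1)) := by
    have : Real.exp (-(α+1)) < 1 := Real.exp_lt_one_iff.mpr (by linarith)
    linarith
  have hEE : E * Real.exp (-1) = Real.exp (-(α+1)) := by
    rw [hE, ← Real.exp_add]; ring_nf
  refine ⟨E / (1 - Real.exp (-(α+1))) *
    (Real.exp (-1) + ∑' k : ℕ, Real.exp (-1) / (Nat.factorial (k+2)) * φ (k+2)),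
    ?_, hSummable, rfl⟩
  have hden : Tendsto (fun n : ℕ => 1 - E * bIR n 0) atTop (𝓝 (1 - Real.exp (-(α+1)))) := by
    have h0 := tendsto_bIR 0
    simp only [Nat.factorial_zero, Nat.cast_one, div_one] at h0
    have h1 : Tendsto (fun n : ℕ => 1 - E * bIR n 0) atTop (𝓝 (1 - E * Real.exp (-1))) :=
      (h0.const_mul E).const_sub 1
    rwa [hEE] at h1
  have hnum : Tendsto (fun n : ℕ => E * (bIR n 1 + ∑' k, f n k)) atTop
      (𝓝 (E * (Real.exp (-1) + ∑' k : ℕ, Real.exp (-1) / (Nat.factorial (k+2)) * φ (k+2)))) := by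
    have h1 := tendsto_bIR 1
    simp only [Nat.factorial_one, Nat.cast_one, div_one] at h1
    exact (h1.add hTsum).const_mul E
  have hdiv := hnum.div hden hden_pos.ne'
  have hval : E * (Real.exp (-1) + ∑' k : ℕ, Real.exp (-1) / (Nat.factorial (k+2)) * φ (k+2)) /
        (1 - Real.exp (-(α+1)))
      = E / (1 - Real.exp (-(α+1))) *
        (Real.exp (-1) + ∑' k : ℕ, Real.exp (-1) / (Nat.factorial (k+2)) * φ (k+2)) := by
    ring
  rw [hval] at hdiv
  refine Tendsto.congr' ?_ hdiv
  filter_upwards [eventually_ge_atTop 2] with n hn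
  simp only [Pi.div_apply]
  rw [htsum_eq n hn]
  have h := hrec n hn
  have hb0le : bIR n 0 ≤ 1 := by
    rw [bIR_zero]
    refine pow_le_one₀ (one_sub_inv_nonneg (by omega)) ?_
    have : (0:ℝ) ≤ 1/(n:ℝ) := by positivity
    linarith
  have hD : 0 < 1 - E * bIR n 0 := by
    have h1 : E * bIR n 0 ≤ E :=
      mul_le_of_le_one_right hE0.le hb0le
    linarith
  rw [div_eq_iff hD.ne']
  linear_combination -h
end
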